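/- For a module M in category 𝒪̄, the sum of weight spaces of the dual equals the 𝔫-locally-nilpotent part of the dual: M^∨ = (M*)^{𝔫^∞}, where (M*)^{𝔫^∞} is the set of φ ∈ M* annihilated by 𝔫^k for some k ≥ 1. -/

import Mathlib

/- STATEMENT 7: For a module M in category 𝒪̄ (over a split semisimple 𝔤 presented via its
triangular decomposition), the sum of the weight spaces of the dual equals the
𝔫-locally-nilpotent part of the dual: M^∨ = (M*)^{𝔫^∞}.  The dual carries the
contragredient action ⁅X, φ⁆ m = -φ ⁅X, m⁆. -/

open Module

variable {K 𝔤 : Type*}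

section

variable [Field K] [LieRing 𝔤] [LieAlgebra K 𝔤] (𝔥 : LieSubalgebra K 𝔤)
  (M : Type*) [AddCommGroup M] [Module K M] [LieRingModule 𝔤 M] [LieModule K 𝔤 M]

/-- The weight space of a Lie module for a linear character of a subalgebra. -/
def wtSpace (lam : 𝔥 →ₗ[K] K) : Submodule K M where
  carrier := {m | ∀ X : 𝔥, ⁅(X : 𝔤), m⁆ = lam X • m}
  add_mem' := fun ha hb X => by rw [lie_add, ha X, hb X, smul_add]
  zero_mem' := fun X => by simp
  smul_mem' := fun c a ha X => by rw [lie_smul, ha X, smul_comm]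

/-- `M^∨`: the sum of the weight spaces of the dual module. -/
def Mvee : Submodule K (Module.Dual K M) :=
  ⨆ lam : 𝔥 →ₗ[K] K, wtSpace 𝔥 (Module.Dual K M) lam

end

section Aux

variable [Field K] [LieRing 𝔤] [LieAlgebra K 𝔤] (𝔥 : LieSubalgebra K 𝔤)
  (M : Type*) [AddCommGroup M] [Module K M] [LieRingModule 𝔤 M] [LieModule K 𝔤 M]

lemma mem_wtSpace {𝔥 : LieSubalgebra K 𝔤} {M : Type*} [AddCommGroup M] [Module K M]
    [LieRingModule 𝔤 M] [LieModule K 𝔤 M] {lam : 𝔥 →ₗ[K] K} {m : M} :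
    m ∈ wtSpace 𝔥 M lam ↔ ∀ X : 𝔥, ⁅(X : 𝔤), m⁆ = lam X • m := Iff.rfl

lemma lie_mem_wtSpace {𝔥 : LieSubalgebra K 𝔤} {M : Type*} [AddCommGroup M] [Module K M]
    [LieRingModule 𝔤 M] [LieModule K 𝔤 M] {a lam : 𝔥 →ₗ[K] K} {x : 𝔤}
    (hx : ∀ H : 𝔥, ⁅(H : 𝔤), x⁆ = a H • x)
    {m : M} (hm : m ∈ wtSpace 𝔥 M lam) : ⁅x, m⁆ ∈ wtSpace 𝔥 M (a + lam) := by
  intro H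
  rw [leibniz_lie, hx H, hm H, smul_lie, lie_smul, LinearMap.add_apply, add_smul]

variable (Λ₀ : Finset (𝔥 →ₗ[K] K)) {Φ : Finset (𝔥 →ₗ[K] K)} (E : Φ → 𝔤)

/-- Iterated application of root vectors `E a` to a weight vector with weight in `Λ₀`. -/
inductive Chain : ℕ → (𝔥 →ₗ[K] K) → M → Prop
  | base (ν : 𝔥 →ₗ[K] K) (hν : ν ∈ Λ₀) (m : M) (hm : m ∈ wtSpace 𝔥 M ν) : Chain 0 ν m
  | step (j : ℕ) (ν : 𝔥 →ₗ[K] K) (m : M) (a : Φ) (h : Chain j ν m) :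
      Chain (j + 1) (ν + (a : 𝔥 →ₗ[K] K)) ⁅E a, m⁆

variable {𝔥 M Λ₀ E}

lemma Chain.mem_wtSpace' (hE : ∀ a : Φ, ∀ H : 𝔥, ⁅(H : 𝔤), E a⁆ = (a : 𝔥 →ₗ[K] K) H • E a)
    {j : ℕ} {ν : 𝔥 →ₗ[K] K} {g : M} (h : Chain 𝔥 M Λ₀ E j ν g) : g ∈ wtSpace 𝔥 M ν := by
  induction h with
  | base ν hν m hm => exact hm
  | step j ν m a h ih => exact add_comm ν (a : 𝔥 →ₗ[K] K) ▸ lie_mem_wtSpace (hE a) ih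

lemma Chain.exists_coeffs [DecidableEq (𝔥 →ₗ[K] K)]
    {j : ℕ} {ν : 𝔥 →ₗ[K] K} {g : M} (h : Chain 𝔥 M Λ₀ E j ν g) :
    ∃ l0 ∈ Λ₀, ∃ c : Φ → ℕ, (∑ a : Φ, c a) = j ∧
      ν = l0 + ∑ a : Φ, c a • (a : 𝔥 →ₗ[K] K) := by
  classical
  induction h with
  | base ν hν m hm =>
      exact ⟨ν, hν, fun _ => 0, by simp, by simp⟩
  | step j ν m a h ih =>
      obtain ⟨l0, hl0, c, hsum, hν⟩ := ih
      refine ⟨l0, hl0, fun b => c b + if b = a then 1 else 0, ?_, ?_⟩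
      · rw [Finset.sum_add_distrib, hsum, Finset.sum_ite_eq' Finset.univ a (fun _ => 1)]
        simp
      · rw [hν]
        have : ∑ b : Φ, (c b + if b = a then 1 else 0) • (b : 𝔥 →ₗ[K] K)
            = (∑ b : Φ, c b • (b : 𝔥 →ₗ[K] K)) + (a : 𝔥 →ₗ[K] K) := by
          simp only [add_smul, ite_smul, one_smul, zero_smul, Finset.sum_add_distrib,
            Finset.sum_ite_eq' Finset.univ a, Finset.mem_univ, if_true]
        rw [this]
        abel


lemma Chain.exists_foldl {𝔫 : LieSubalgebra K 𝔤} (hE1 : ∀ a : Φ, E a ∈ 𝔫)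
    {j : ℕ} {ν : 𝔥 →ₗ[K] K} {g : M} (h : Chain 𝔥 M Λ₀ E j ν g) :
    ∀ k ≤ j, ∃ l : List 𝔤, l.length = k ∧ (∀ x ∈ l, x ∈ 𝔫) ∧ ∃ m₀ : M,
      g = l.foldl (fun m x => ⁅x, m⁆) m₀ := by
  induction h with
  | base ν hν m hm =>
      intro k hk
      interval_cases k
      exact ⟨[], rfl, by simp, m, rfl⟩
  | step j ν m a h ih =>
      intro k hk
      match k with
      | 0 => exact ⟨[], rfl, by simp, _, rfl⟩
      | (k' + 1) =>
          obtain ⟨l, hlen, hmem, m₀, hfold⟩ := ih k' (Nat.lt_succ_iff.mp hk)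
          refine ⟨l ++ [E a], by simp [hlen], ?_, m₀, ?_⟩
          · intro x hx
            rcases List.mem_append.mp hx with h | h
            · exact hmem x h
            · simp only [List.mem_singleton] at h; exact h ▸ hE1 a
          · rw [List.foldl_append, ← hfold]
            rfl

variable (𝔥 M Λ₀ E) in
/-- Span of the chain vectors of length `i`. -/
def chSpan (i : ℕ) : Submodule K M :=
  Submodule.span K {g | ∃ ν, Chain 𝔥 M Λ₀ E i ν g}

lemma lie_mem_chSpan {𝔫 : LieSubalgebra K 𝔤}
    (hspan : Submodule.span K (Set.range E) = 𝔫.toSubmodule)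
    {x : 𝔤} (hx : x ∈ 𝔫) {i : ℕ} {g : M} (hg : g ∈ chSpan 𝔥 M Λ₀ E i) :
    ⁅x, g⁆ ∈ chSpan 𝔥 M Λ₀ E (i + 1) := by
  induction hg using Submodule.span_induction with
  | mem g' hg' =>
      obtain ⟨ν, hc⟩ := hg'
      have hx' : x ∈ Submodule.span K (Set.range E) := by
        rw [hspan]; exact hx
      clear hx
      induction hx' using Submodule.span_induction with
      | mem y hy =>
          obtain ⟨a, rfl⟩ := hy
          exact Submodule.subset_span ⟨_, Chain.step _ _ _ a hc⟩
      | zero => rw [zero_lie]; exact zero_mem _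
      | add y z hy hz ihy ihz => rw [add_lie]; exact add_mem ihy ihz
      | smul t y hy ihy => rw [smul_lie]; exact Submodule.smul_mem _ _ ihy
  | zero => rw [lie_zero]; exact zero_mem _
  | add y z hy hz ihy ihz => rw [lie_add]; exact add_mem ihy ihz
  | smul t y hy ihy => rw [lie_smul]; exact Submodule.smul_mem _ _ ihy

lemma foldl_mem_chSpan {𝔫 : LieSubalgebra K 𝔤}
    (hspan : Submodule.span K (Set.range E) = 𝔫.toSubmodule)
    (l : List 𝔤) (hl : ∀ x ∈ l, x ∈ 𝔫) :
    ∀ {i : ℕ} {g : M}, g ∈ chSpan 𝔥 M Λ₀ E i →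
      l.foldl (fun m x => ⁅x, m⁆) g ∈ chSpan 𝔥 M Λ₀ E (i + l.length) := by
  induction l with
  | nil => intro i g hg; simpa using hg
  | cons x t ih =>
      intro i g hg
      have h1 : ⁅x, g⁆ ∈ chSpan 𝔥 M Λ₀ E (i + 1) :=
        lie_mem_chSpan hspan (hl x List.mem_cons_self) hg
      have := ih (fun y hy => hl y (List.mem_cons_of_mem x hy)) h1
      simpa [Nat.add_assoc, Nat.add_comm 1 t.length] using this


lemma good_eq_top {𝔥 𝔫 𝔫' : LieSubalgebra K 𝔤} {M : Type*} [AddCommGroup M] [Module K M]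
    [LieRingModule 𝔤 M] [LieModule K 𝔤 M]
    (htri : 𝔫'.toSubmodule ⊔ 𝔥.toSubmodule ⊔ 𝔫.toSubmodule = ⊤)
    (s : Finset M) (hs : LieSubmodule.lieSpan K 𝔤 (s : Set M) = ⊤)
    (W : Submodule K M) (hsW : ↑s ⊆ (W : Set M))
    (hW' : ∀ y ∈ 𝔫', ∀ w ∈ W, ⁅y, w⁆ ∈ W)
    (Q : Submodule K M) (hWQ : W ≤ Q)
    (hQh : ∀ h ∈ 𝔥, ∀ q ∈ Q, ⁅h, q⁆ ∈ Q)
    (hQn : ∀ x ∈ 𝔫, ∀ q ∈ Q, ⁅x, q⁆ ∈ Q) : Q = ⊤ := by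
  classical
  set good : Set (Submodule K M) :=
    {P | W ≤ P ∧ (∀ h ∈ 𝔥, ∀ q ∈ P, ⁅h, q⁆ ∈ P) ∧ (∀ x ∈ 𝔫, ∀ q ∈ P, ⁅x, q⁆ ∈ P)} with hgood
  set N : Submodule K M := sInf good with hN
  have hNW : W ≤ N := le_sInf fun P hP => hP.1
  have hNh : ∀ h ∈ 𝔥, ∀ q ∈ N, ⁅h, q⁆ ∈ N := fun h hh q hq =>
    Submodule.mem_sInf.mpr fun P hP => hP.2.1 h hh q (Submodule.mem_sInf.mp hq P hP)
  have hNn : ∀ x ∈ 𝔫, ∀ q ∈ N, ⁅x, q⁆ ∈ N := fun x hx q hq =>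
    Submodule.mem_sInf.mpr fun P hP => hP.2.2 x hx q (Submodule.mem_sInf.mp hq P hP)
  have hdec : ∀ z : 𝔤, ∃ y ∈ 𝔫', ∃ h ∈ 𝔥, ∃ x ∈ 𝔫, z = y + h + x := by
    intro z
    have hz : z ∈ 𝔫'.toSubmodule ⊔ 𝔥.toSubmodule ⊔ 𝔫.toSubmodule := by
      rw [htri]; trivial
    obtain ⟨w, hw, x, hx, rfl⟩ := Submodule.mem_sup.mp hz
    obtain ⟨y, hy, h, hh, rfl⟩ := Submodule.mem_sup.mp hw
    exact ⟨y, hy, h, hh, x, hx, rfl⟩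
  let N' : Submodule K M :=
    { carrier := {n | n ∈ N ∧ ∀ y ∈ 𝔫', ⁅y, n⁆ ∈ N}
      add_mem' := fun ha hb => ⟨add_mem ha.1 hb.1, fun y hy => by
        rw [lie_add]; exact add_mem (ha.2 y hy) (hb.2 y hy)⟩
      zero_mem' := ⟨zero_mem _, fun y hy => by rw [lie_zero]; exact zero_mem _⟩
      smul_mem' := fun c n hn => ⟨Submodule.smul_mem _ _ hn.1, fun y hy => by
        rw [lie_smul]; exact Submodule.smul_mem _ _ (hn.2 y hy)⟩ }
  have hmemN' : ∀ n : M, n ∈ N' ↔ n ∈ N ∧ ∀ y ∈ 𝔫', ⁅y, n⁆ ∈ N := fun n => Iff.rfl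
  have hstab : ∀ z : 𝔤, (z ∈ 𝔥 ∨ z ∈ 𝔫) → ∀ q ∈ N', ⁅z, q⁆ ∈ N' := by
    intro z hz q hq
    have hzq : ⁅z, q⁆ ∈ N := by
      rcases hz with hz | hz
      · exact hNh z hz q hq.1
      · exact hNn z hz q hq.1
    refine ⟨hzq, fun y hy => ?_⟩
    have key : ⁅y, ⁅z, q⁆⁆ = ⁅⁅y, z⁆, q⁆ + ⁅z, ⁅y, q⁆⁆ := leibniz_lie y z q
    rw [key]
    have h2 : ⁅z, ⁅y, q⁆⁆ ∈ N := by
      rcases hz with hz | hz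
      · exact hNh z hz _ (hq.2 y hy)
      · exact hNn z hz _ (hq.2 y hy)
    obtain ⟨y₁, hy₁, h₁, hh₁, x₁, hx₁, hzy⟩ := hdec ⁅y, z⁆
    have h1 : ⁅⁅y, z⁆, q⁆ ∈ N := by
      rw [hzy, add_lie, add_lie]
      exact add_mem (add_mem (hq.2 y₁ hy₁) (hNh h₁ hh₁ q hq.1)) (hNn x₁ hx₁ q hq.1)
    exact add_mem h1 h2
  have hN'good : N' ∈ good := by
    refine ⟨fun w hw => ⟨hNW hw, fun y hy => hNW (hW' y hy w hw)⟩, ?_, ?_⟩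
    · exact fun h hh q hq => hstab h (Or.inl hh) q hq
    · exact fun x hx q hq => hstab x (Or.inr hx) q hq
  have hNN' : N ≤ N' := sInf_le hN'good
  have hNlie : ∀ z : 𝔤, ∀ n ∈ N, ⁅z, n⁆ ∈ N := by
    intro z n hn
    obtain ⟨y, hy, h, hh, x, hx, rfl⟩ := hdec z
    rw [add_lie, add_lie]
    exact add_mem (add_mem ((hNN' hn).2 y hy) (hNh h hh n hn)) (hNn x hx n hn)
  let NL : LieSubmodule K 𝔤 M :=
    { toSubmodule := N
      lie_mem := fun {z n} hn => hNlie z n hn }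
  have hsN : (s : Set M) ⊆ N := fun m hm => hNW (hsW hm)
  have hNtop : N = ⊤ := by
    have h1 : LieSubmodule.lieSpan K 𝔤 (s : Set M) ≤ NL := (LieSubmodule.lieSpan_le).mpr hsN
    rw [hs] at h1
    have : NL = ⊤ := top_le_iff.mp h1
    exact congrArg LieSubmodule.toSubmodule this
  have hQgood : Q ∈ good := ⟨hWQ, hQh, hQn⟩
  exact top_le_iff.mp (hNtop ▸ sInf_le hQgood)


lemma foldl_exists_linear (l : List 𝔤) {M : Type*} [AddCommGroup M] [Module K M]
    [LieRingModule 𝔤 M] [LieModule K 𝔤 M] :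
    ∃ F : M →ₗ[K] M, ∀ m : M, l.foldl (fun m x => ⁅x, m⁆) m = F m := by
  induction l with
  | nil => exact ⟨LinearMap.id, fun m => rfl⟩
  | cons x t ih =>
      obtain ⟨F, hF⟩ := ih
      exact ⟨F ∘ₗ LieModule.toEnd K 𝔤 M x, fun m => hF ⁅x, m⁆⟩

lemma foldr_apply {M : Type*} [AddCommGroup M] [Module K M]
    [LieRingModule 𝔤 M] [LieModule K 𝔤 M] (φ : Module.Dual K M) (l : List 𝔤) (m : M) :
    (l.foldr (fun X ψ => ⁅X, ψ⁆) φ) m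
      = (-1 : K) ^ l.length * φ (l.foldl (fun m x => ⁅x, m⁆) m) := by
  induction l generalizing m with
  | nil => simp
  | cons x t ih =>
      have : (List.foldr (fun X ψ => ⁅X, ψ⁆) φ (x :: t)) m
          = -((t.foldr (fun X ψ => ⁅X, ψ⁆) φ) ⁅x, m⁆) := rfl
      rw [this, ih ⁅x, m⁆]
      show _ = (-1 : K) ^ (t.length + 1) * _
      ring_nf
      rfl

lemma foldr_zero {M : Type*} [AddCommGroup M] [Module K M]
    [LieRingModule 𝔤 M] [LieModule K 𝔤 M] (l : List 𝔤) :
    l.foldr (fun X (ψ : Module.Dual K M) => ⁅X, ψ⁆) 0 = 0 := by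
  induction l with
  | nil => rfl
  | cons x t ih => show ⁅x, t.foldr _ (0 : Module.Dual K M)⁆ = 0; rw [ih, lie_zero]

lemma foldr_add {M : Type*} [AddCommGroup M] [Module K M]
    [LieRingModule 𝔤 M] [LieModule K 𝔤 M] (l : List 𝔤) (φ ψ : Module.Dual K M) :
    l.foldr (fun X ρ => ⁅X, ρ⁆) (φ + ψ)
      = l.foldr (fun X ρ => ⁅X, ρ⁆) φ + l.foldr (fun X ρ => ⁅X, ρ⁆) ψ := by
  induction l with
  | nil => rfl
  | cons x t ih => show ⁅x, t.foldr _ (φ + ψ)⁆ = _; rw [ih, lie_add]; rfl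

lemma foldr_smul {M : Type*} [AddCommGroup M] [Module K M]
    [LieRingModule 𝔤 M] [LieModule K 𝔤 M] (l : List 𝔤) (c : K) (φ : Module.Dual K M) :
    l.foldr (fun X ρ => ⁅X, ρ⁆) (c • φ) = c • l.foldr (fun X ρ => ⁅X, ρ⁆) φ := by
  induction l with
  | nil => rfl
  | cons x t ih =>
      show ⁅x, t.foldr _ (c • φ)⁆ = _
      rw [ih]
      show ⁅x, c • List.foldr (fun X ρ => ⁅X, ρ⁆) φ t⁆
          = c • ⁅x, List.foldr (fun X ρ => ⁅X, ρ⁆) φ t⁆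
      exact lie_smul c x (List.foldr (fun X ρ => ⁅X, ρ⁆) φ t)

lemma foldr_mono {𝔫 : LieSubalgebra K 𝔤} {M : Type*} [AddCommGroup M] [Module K M]
    [LieRingModule 𝔤 M] [LieModule K 𝔤 M] {φ : Module.Dual K M} {k k' : ℕ} (hkk' : k ≤ k')
    (h : ∀ l : List 𝔤, l.length = k → (∀ x ∈ l, x ∈ 𝔫) →
      l.foldr (fun X ψ => ⁅X, ψ⁆) φ = 0) :
    ∀ l : List 𝔤, l.length = k' → (∀ x ∈ l, x ∈ 𝔫) →
      l.foldr (fun X ψ => ⁅X, ψ⁆) φ = 0 := by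
  intro l hlen hmem
  have hsplit : l = l.take (k' - k) ++ l.drop (k' - k) := (List.take_append_drop _ l).symm
  rw [hsplit, List.foldr_append]
  rw [h (l.drop (k' - k)) (by rw [List.length_drop, hlen]; omega)
    (fun x hx => hmem x (List.mem_of_mem_drop hx))]
  exact foldr_zero _

end Aux

set_option maxHeartbeats 1000000 in
set_option synthInstance.maxHeartbeats 200000 in
theorem Mvee_eq_n_locally_nilpotent_part
    [Field K] [CharZero K] [LieRing 𝔤] [LieAlgebra K 𝔤] [FiniteDimensional K 𝔤]
    [LieAlgebra.IsSemisimple K 𝔤]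
    (𝔥 𝔫 𝔫' : LieSubalgebra K 𝔤) (hab : IsLieAbelian 𝔥)
    -- triangular decomposition 𝔤 = 𝔫̄ ⊕ 𝔥 ⊕ 𝔫 (here 𝔫' denotes 𝔫̄)
    (htri : 𝔫'.toSubmodule ⊔ 𝔥.toSubmodule ⊔ 𝔫.toSubmodule = ⊤)
    (hhn : ∀ (H : 𝔥) (Y : 𝔫), ⁅(H : 𝔤), (Y : 𝔤)⁆ ∈ 𝔫)
    (hhn' : ∀ (H : 𝔥) (Y : 𝔫'), ⁅(H : 𝔤), (Y : 𝔤)⁆ ∈ 𝔫')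
    -- the positive roots and corresponding root vectors spanning 𝔫
    (Φ : Finset (𝔥 →ₗ[K] K)) (E : Φ → 𝔤)
    (hE : ∀ a : Φ, E a ∈ 𝔫 ∧ ∀ H : 𝔥, ⁅(H : 𝔤), E a⁆ = (a : 𝔥 →ₗ[K] K) H • E a)
    (hspan : Submodule.span K (Set.range E) = 𝔫.toSubmodule)
    (hfin : ∀ mu nu : 𝔥 →ₗ[K] K,
      {c : Φ → ℕ | mu = nu + ∑ a : Φ, c a • (a : 𝔥 →ₗ[K] K)}.Finite)
    (M : Type*) [AddCommGroup M] [Module K M] [LieRingModule 𝔤 M] [LieModule K 𝔤 M]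
    [DecidableEq (𝔥 →ₗ[K] K)]
    -- M lies in category 𝒪̄ :
    (hfg : ∃ s : Finset M, LieSubmodule.lieSpan K 𝔤 (s : Set M) = ⊤)
    (hlf : ∀ m : M, ∃ W : Submodule K M, m ∈ W ∧ FiniteDimensional K ↥W ∧
      ∀ Y : 𝔫', ∀ w ∈ W, ⁅(Y : 𝔤), w⁆ ∈ W)
    (hdiag : DirectSum.IsInternal (wtSpace 𝔥 M)) :
    -- M^∨ = (M*)^{𝔫^∞}
    ∀ φ : Module.Dual K M, φ ∈ Mvee 𝔥 M ↔
      ∃ k : ℕ, 1 ≤ k ∧ ∀ l : List 𝔤, l.length = k → (∀ x ∈ l, x ∈ 𝔫) →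
        l.foldr (fun X ψ => ⁅X, ψ⁆) φ = 0 := by
  classical
  have hE1 : ∀ a : Φ, E a ∈ 𝔫 := fun a => (hE a).1
  have hE2 : ∀ a : Φ, ∀ H : 𝔥, ⁅(H : 𝔤), E a⁆ = (a : 𝔥 →ₗ[K] K) H • E a := fun a => (hE a).2
  obtain ⟨s, hs⟩ := hfg
  choose Wm hWm1 hWm2 hWm3 using hlf
  set W : Submodule K M := s.sup Wm with hWdef
  have hsW : (s : Set M) ⊆ (W : Set M) := fun m hm => Finset.le_sup (f := Wm) hm (hWm1 m)
  have hWn' : ∀ y ∈ 𝔫', ∀ w ∈ W, ⁅y, w⁆ ∈ W := by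
    intro y hy
    have hle : W ≤ Submodule.comap (LieModule.toEnd K 𝔤 M y) W := by
      refine Finset.sup_le ?_
      intro m hm w hw
      simp only [Submodule.mem_comap, LieModule.toEnd_apply_apply]
      exact Finset.le_sup (f := Wm) hm (hWm3 m ⟨y, hy⟩ w hw)
    intro w hw
    simpa [LieModule.toEnd_apply_apply] using hle hw
  have hWfg : W.FG :=
    Submodule.fg_finset_sup s Wm fun m _ =>
      (Submodule.fg_iff_finiteDimensional _).mpr (hWm2 m)
  obtain ⟨sW, hsWspan⟩ := hWfg
  -- the direct sum decomposition
  set e := LinearEquiv.ofBijective (DirectSum.coeLinearMap (wtSpace 𝔥 M)) hdiag with he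
  have htop : (⨆ lam : 𝔥 →ₗ[K] K, wtSpace 𝔥 M lam) = ⊤ := hdiag.submodule_iSup_eq_top
  have hext : ∀ p : M → Prop,
      (∀ lam : 𝔥 →ₗ[K] K, ∀ m ∈ wtSpace 𝔥 M lam, p m) → p 0 →
      (∀ a b : M, p a → p b → p (a + b)) → ∀ m : M, p m := by
    intro p hp h0 hadd m
    exact Submodule.iSup_induction (motive := p) _ (htop ▸ Submodule.mem_top) hp h0 hadd
  -- decomposition of an element into weight components
  have hdec : ∀ m : M, m = ∑ lam ∈ (e.symm m).support, ((e.symm m) lam : M) := by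
    intro m
    conv_lhs => rw [← e.apply_symm_apply m, ← DirectSum.sum_support_of (e.symm m)]
    rw [map_sum]
    refine Finset.sum_congr rfl fun lam _ => ?_
    rw [he]; exact DirectSum.coeLinearMap_of _ _ _
  -- the finite set of base weights
  set Λ₀ : Finset (𝔥 →ₗ[K] K) := sW.attach.biUnion (fun m => (e.symm m.1).support) with hΛ₀
  -- the chain span is everything
  set Q : Submodule K M := ⨆ i : ℕ, chSpan 𝔥 M Λ₀ E i with hQ
  have hWQ : W ≤ Q := by
    rw [← hsWspan]
    refine Submodule.span_le.mpr ?_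
    intro m hm
    rw [hdec m]
    refine Submodule.sum_mem _ fun lam hlam => ?_
    refine Submodule.mem_iSup_of_mem 0 ?_
    refine Submodule.subset_span ⟨lam, Chain.base lam ?_ _ (((e.symm m) lam).2)⟩
    exact Finset.mem_biUnion.mpr ⟨⟨m, hm⟩, Finset.mem_attach _ _, hlam⟩
  have hQh : ∀ h ∈ 𝔥, ∀ q ∈ Q, ⁅h, q⁆ ∈ Q := by
    intro h hh q hq
    refine Submodule.iSup_induction _ (motive := fun z => ⁅h, z⁆ ∈ Q) hq ?_ ?_ ?_
    · intro i q hq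
      induction hq using Submodule.span_induction with
      | mem g hg =>
          obtain ⟨ν, hg⟩ := hg
          have hgw : g ∈ wtSpace 𝔥 M ν := hg.mem_wtSpace' hE2
          have : ⁅h, g⁆ = ν ⟨h, hh⟩ • g := hgw ⟨h, hh⟩
          rw [this]
          exact Submodule.smul_mem _ _
            (Submodule.mem_iSup_of_mem i (Submodule.subset_span ⟨ν, hg⟩))
      | zero => rw [lie_zero]; exact zero_mem _
      | add y z hy hz ihy ihz => rw [lie_add]; exact add_mem ihy ihz
      | smul t y hy ihy => rw [lie_smul]; exact Submodule.smul_mem _ _ ihy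
    · show ⁅h, (0 : M)⁆ ∈ Q
      rw [lie_zero]; exact zero_mem _
    · intro a b ha hb
      show ⁅h, a + b⁆ ∈ Q
      rw [lie_add]; exact add_mem ha hb
  have hQn : ∀ x ∈ 𝔫, ∀ q ∈ Q, ⁅x, q⁆ ∈ Q := by
    intro x hx q hq
    refine Submodule.iSup_induction _ (motive := fun z => ⁅x, z⁆ ∈ Q) hq ?_ ?_ ?_
    · intro i q hq
      exact Submodule.mem_iSup_of_mem (i + 1) (lie_mem_chSpan hspan hx hq)
    · show ⁅x, (0 : M)⁆ ∈ Q
      rw [lie_zero]; exact zero_mem _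
    · intro a b ha hb
      show ⁅x, a + b⁆ ∈ Q
      rw [lie_add]; exact add_mem ha hb
  have hQtop : Q = ⊤ := good_eq_top htri s hs W hsW hWn' Q hWQ hQh hQn
  have hmemQ : ∀ m : M, m ∈ ⨆ i : ℕ, chSpan 𝔥 M Λ₀ E i := by
    intro m
    show m ∈ Q
    rw [hQtop]
    trivial
  -- projections onto weight spaces
  set π : (𝔥 →ₗ[K] K) → (M →ₗ[K] M) := fun lam =>
    (wtSpace 𝔥 M lam).subtype ∘ₗ
      (DirectSum.component K (𝔥 →ₗ[K] K) (fun mu => ↥(wtSpace 𝔥 M mu)) lam) ∘ₗ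
      (e.symm : M →ₗ[K] _) with hπ
  have hπapp : ∀ lam m, π lam m = ((e.symm m) lam : M) := fun lam m => rfl
  have hπself : ∀ lam : 𝔥 →ₗ[K] K, ∀ m ∈ wtSpace 𝔥 M lam, π lam m = m := by
    intro lam m hm
    rw [hπapp, he, hdiag.ofBijective_coeLinearMap_of_mem hm]
  have hπne : ∀ lam ν : 𝔥 →ₗ[K] K, ν ≠ lam → ∀ m ∈ wtSpace 𝔥 M ν, π lam m = 0 := by
    intro lam ν hne m hm
    rw [hπapp, he, hdiag.ofBijective_coeLinearMap_of_mem_ne hne hm]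
    rfl
  intro φ
  constructor
  · -- M^∨ ⊆ (M*)^{𝔫^∞}
    intro hφ
    refine Submodule.iSup_induction _
      (motive := fun ψ : Module.Dual K M => ∃ k : ℕ, 1 ≤ k ∧ ∀ l : List 𝔤, l.length = k →
        (∀ x ∈ l, x ∈ 𝔫) → l.foldr (fun X ψ => ⁅X, ψ⁆) ψ = 0) hφ ?_ ?_ ?_
    · -- weight vectors of the dual
      intro μ ψ hψ
      -- ψ kills weight spaces other than -μ
      have hkill : ∀ ν : 𝔥 →ₗ[K] K, ν ≠ -μ → ∀ m ∈ wtSpace 𝔥 M ν, ψ m = 0 := by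
        intro ν hν m hm
        have hXne : ∃ X : 𝔥, μ X + ν X ≠ 0 := by
          by_contra hcon
          push_neg at hcon
          apply hν
          apply LinearMap.ext
          intro X
          have := hcon X
          simp only [LinearMap.neg_apply]
          linear_combination this
        obtain ⟨X, hX⟩ := hXne
        have h1 := LinearMap.congr_fun (hψ X) m
        have h2 : (⁅(X : 𝔤), ψ⁆ : Module.Dual K M) m = -ψ ⁅(X : 𝔤), m⁆ := rfl
        rw [h2, hm X] at h1
        simp only [map_smul, smul_eq_mul, LinearMap.smul_apply] at h1
        have : (μ X + ν X) * ψ m = 0 := by linear_combination -h1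
        exact (mul_eq_zero.mp this).resolve_left hX
      -- the bad degrees are bounded
      have hSfin : {c : Φ → ℕ | ∃ l0 ∈ Λ₀, -μ = l0 + ∑ a : Φ, c a • (a : 𝔥 →ₗ[K] K)}.Finite := by
        have : {c : Φ → ℕ | ∃ l0 ∈ Λ₀, -μ = l0 + ∑ a : Φ, c a • (a : 𝔥 →ₗ[K] K)} ⊆
            ⋃ l0 ∈ (Λ₀ : Set (𝔥 →ₗ[K] K)),
              {c : Φ → ℕ | -μ = l0 + ∑ a : Φ, c a • (a : 𝔥 →ₗ[K] K)} := by
          rintro c ⟨l0, hl0, hc⟩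
          exact Set.mem_biUnion hl0 hc
        exact Set.Finite.subset (Set.Finite.biUnion Λ₀.finite_toSet
          (fun l0 _ => hfin (-μ) l0)) this
      obtain ⟨B, hB⟩ := (hSfin.image (fun c => ∑ a : Φ, c a)).bddAbove
      set k : ℕ := B + 1 with hk
      -- φ kills all chain spans of degree ≥ k
      have hker : ∀ j : ℕ, k ≤ j → chSpan 𝔥 M Λ₀ E j ≤ LinearMap.ker ψ := by
        intro j hj
        refine Submodule.span_le.mpr ?_
        rintro g ⟨ν, hg⟩
        obtain ⟨l0, hl0, c, hcsum, hceq⟩ := hg.exists_coeffs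
        have hν : ν ≠ -μ := by
          intro hcon
          have hcS : c ∈ {c : Φ → ℕ | ∃ l0 ∈ Λ₀, -μ = l0 + ∑ a : Φ, c a • (a : 𝔥 →ₗ[K] K)} :=
            ⟨l0, hl0, hcon ▸ hceq⟩
          have : (∑ a : Φ, c a) ≤ B := hB (Set.mem_image_of_mem _ hcS)
          omega
        exact LinearMap.mem_ker.mpr (hkill ν hν g (hg.mem_wtSpace' hE2))
      refine ⟨k, by omega, ?_⟩
      intro l hlen hmem
      apply LinearMap.ext
      intro m
      rw [foldr_apply, LinearMap.zero_apply]
      have hφf : ψ (l.foldl (fun m x => ⁅x, m⁆) m) = 0 := by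
        obtain ⟨F, hF⟩ := foldl_exists_linear (K := K) l (M := M)
        refine Submodule.iSup_induction _ (motive := fun z : M => ψ (l.foldl (fun m x => ⁅x, m⁆) z) = 0)
          (hmemQ m) ?_ ?_ ?_
        · intro i q hq
          induction hq using Submodule.span_induction with
          | mem g hg =>
              have : l.foldl (fun m x => ⁅x, m⁆) g ∈ chSpan 𝔥 M Λ₀ E (i + l.length) :=
                foldl_mem_chSpan hspan l hmem (Submodule.subset_span hg)
              exact hker (i + l.length) (by omega) this
          | zero => rw [hF, map_zero, map_zero]
          | add y z hy hz ihy ihz => rw [hF, map_add, map_add, ← hF, ← hF] at *; rw [ihy, ihz, add_zero]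
          | smul t y hy ihy => rw [hF, map_smul, map_smul, ← hF, ihy, smul_zero]
        · beta_reduce
          rw [hF, map_zero, map_zero]
        · intro a b ha hb
          beta_reduce at ha hb ⊢
          rw [hF, map_add, map_add, ← hF, ← hF, ha, hb, add_zero]
      rw [hφf, mul_zero]
    · exact ⟨1, le_refl 1, fun l _ _ => foldr_zero l⟩
    · rintro ψ₁ ψ₂ ⟨k₁, hk₁, h₁⟩ ⟨k₂, hk₂, h₂⟩
      refine ⟨max k₁ k₂, le_trans hk₁ (le_max_left _ _), ?_⟩
      intro l hlen hmem
      rw [foldr_add, foldr_mono (le_max_left k₁ k₂) h₁ l hlen hmem,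
        foldr_mono (le_max_right k₁ k₂) h₂ l hlen hmem, add_zero]
  · -- (M*)^{𝔫^∞} ⊆ M^∨
    rintro ⟨k, hk1, hC⟩
    have hC' : ∀ l : List 𝔤, l.length = k → (∀ x ∈ l, x ∈ 𝔫) →
        ∀ m : M, φ (l.foldl (fun m x => ⁅x, m⁆) m) = 0 := by
      intro l hlen hmem m
      have h0 := LinearMap.congr_fun (hC l hlen hmem) m
      rw [foldr_apply, LinearMap.zero_apply] at h0
      have h1 : ((-1 : K) ^ l.length) ≠ 0 := pow_ne_zero _ (neg_ne_zero.mpr one_ne_zero)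
      exact (mul_eq_zero.mp h0).resolve_left h1
    set T : Finset (𝔥 →ₗ[K] K) :=
      (Λ₀ ×ˢ (Fintype.piFinset fun _ : Φ => Finset.range k)).image
        (fun p => p.1 + ∑ a : Φ, p.2 a • (a : 𝔥 →ₗ[K] K)) with hT
    -- φ vanishes on weight spaces with weight outside T
    have hvan : ∀ lam ∉ T, ∀ m ∈ wtSpace 𝔥 M lam, φ m = 0 := by
      intro lam hlam m hm
      have h1 : ∀ m' : M, φ (π lam m') = 0 := by
        intro m'
        refine Submodule.iSup_induction _ (motive := fun z : M => φ (π lam z) = 0)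
          (hmemQ m') ?_ ?_ ?_
        · intro i q hq
          induction hq using Submodule.span_induction with
          | mem g hg =>
              obtain ⟨ν, hg⟩ := hg
              by_cases hν : ν = lam
              · subst hν
                rw [hπself ν g (hg.mem_wtSpace' hE2)]
                obtain ⟨l0, hl0, c, hcsum, hceq⟩ := hg.exists_coeffs
                by_cases hall : ∀ a : Φ, c a < k
                · exfalso
                  apply hlam
                  refine Finset.mem_image.mpr ⟨(l0, c), ?_, hceq.symm⟩
                  exact Finset.mem_product.mpr ⟨hl0,
                    Fintype.mem_piFinset.mpr fun a => Finset.mem_range.mpr (hall a)⟩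
                · push_neg at hall
                  obtain ⟨a, ha⟩ := hall
                  have hki : k ≤ i := by
                    calc k ≤ c a := ha
                    _ ≤ ∑ b : Φ, c b := Finset.single_le_sum
                        (fun _ _ => Nat.zero_le _) (Finset.mem_univ a)
                    _ = i := hcsum
                  obtain ⟨l, hlen, hmem, m₀, hfold⟩ := hg.exists_foldl hE1 k hki
                  rw [hfold]
                  exact hC' l hlen hmem m₀
              · rw [hπne lam ν hν g (hg.mem_wtSpace' hE2), map_zero]
          | zero => rw [map_zero, map_zero]
          | add y z hy hz ihy ihz => rw [map_add, map_add, ihy, ihz, add_zero]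
          | smul t y hy ihy => rw [map_smul, map_smul, ihy, smul_zero]
        · beta_reduce
          rw [map_zero, map_zero]
        · intro a b ha hb
          beta_reduce at ha hb ⊢
          rw [map_add, map_add, ha, hb, add_zero]
      rw [← hπself lam m hm]
      exact h1 m
    -- the weight components of φ
    have hφν : ∀ ν : 𝔥 →ₗ[K] K, φ ∘ₗ π ν ∈ wtSpace 𝔥 (Module.Dual K M) (-ν) := by
      intro ν X
      apply LinearMap.ext
      intro m
      have hL : (⁅(X : 𝔤), φ ∘ₗ π ν⁆ : Module.Dual K M) m = -φ (π ν ⁅(X : 𝔤), m⁆) := rfl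
      have hR : (((-ν : 𝔥 →ₗ[K] K) X) • (φ ∘ₗ π ν)) m = -(ν X) * φ (π ν m) := by
        simp [neg_mul]
      rw [hL, hR]
      refine hext (fun z => -φ (π ν ⁅(X : 𝔤), z⁆) = -(ν X) * φ (π ν z)) ?_ ?_ ?_ m
      · intro lam z hz
        rw [hz X]
        by_cases hlam : lam = ν
        · subst hlam
          rw [map_smul, map_smul]
          simp [smul_eq_mul, neg_mul]
        · rw [hπne ν lam hlam z hz, map_smul, map_smul]
          rw [hπne ν lam hlam z hz]
          simp
      · simp
      · intro a b ha hb
        rw [lie_add, map_add, map_add, map_add, map_add]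
        rw [neg_add, ha, hb]
        ring
    have hsum : φ = ∑ ν ∈ T, φ ∘ₗ π ν := by
      apply LinearMap.ext
      intro m
      have happ : (∑ ν ∈ T, φ ∘ₗ π ν) m = ∑ ν ∈ T, φ (π ν m) := by
        simp [LinearMap.sum_apply]
      rw [happ]
      refine hext (fun z => φ z = ∑ ν ∈ T, φ (π ν z)) ?_ ?_ ?_ m
      · intro lam z hz
        by_cases hlam : lam ∈ T
        · rw [Finset.sum_eq_single lam]
          · rw [hπself lam z hz]
          · intro ν hν hne
            rw [hπne ν lam (fun h => hne h.symm) z hz, map_zero]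
          · intro h; exact absurd hlam h
        · rw [hvan lam hlam z hz]
          rw [Finset.sum_eq_zero]
          intro ν hν
          have hne : lam ≠ ν := fun h => hlam (h ▸ hν)
          rw [hπne ν lam hne z hz, map_zero]
      · simp
      · intro a b ha hb
        rw [map_add, ha, hb, ← Finset.sum_add_distrib]
        refine Finset.sum_congr rfl fun ν _ => ?_
        rw [map_add, map_add]
    rw [hsum]
    refine Submodule.sum_mem _ fun ν _ => ?_
    exact Submodule.mem_iSup_of_mem (-ν) (hφν ν)
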